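/- Let G be a finite simple graph, v ∈ V(G) and n ∈ ℕ with n ≥ 1. Define G_{v,n} as the graph obtained from G by deleting v and adding a complete graph Kₙ on n new vertices, each new vertex being adjacent to every vertex of N_G(v). Then for every field F, wcdim(G_{v,n}, F) = wcdim(G, F). -/

import Mathlib

/-- `M` is an independent set of `G` (as a finset): pairwise non-adjacent vertices. -/
def IsIndepF {V : Type*} (G : SimpleGraph V) (M : Finset V) : Prop :=
  ∀ v ∈ M, ∀ w ∈ M, ¬ G.Adj v w

/-- `M` is a maximal independent set of `G`: independent and not properly contained
in any other independent set. -/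
def IsMaxIndepF {V : Type*} (G : SimpleGraph V) (M : Finset V) : Prop :=
  IsIndepF G M ∧ ∀ M' : Finset V, IsIndepF G M' → M ⊆ M' → M' = M

/-- The well-covered space of `G` over `F`: all weightings `w : V → F` whose sum over
every maximal independent set of `G` is the same constant. -/
def wcSpace (F : Type*) [Field F] {V : Type*} (G : SimpleGraph V) : Submodule F (V → F) where
  carrier := {w | ∀ M N : Finset V, IsMaxIndepF G M → IsMaxIndepF G N →
    ∑ v ∈ M, w v = ∑ v ∈ N, w v}
  add_mem' := by
    intro a b ha hb M N hM hN
    simp only [Pi.add_apply, Finset.sum_add_distrib, ha M N hM hN, hb M N hM hN]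
  zero_mem' := by intro M N _ _; simp
  smul_mem' := by
    intro c a ha M N hM hN
    simp only [Pi.smul_apply, smul_eq_mul, ← Finset.mul_sum, ha M N hM hN]

/-- The well-covered dimension of `G` over `F`. -/
noncomputable def wcdim (F : Type*) [Field F] {V : Type*} (G : SimpleGraph V) : ℕ :=
  Module.finrank F (wcSpace F G)

/-- `G_{v,n}`: delete `v` from `G` and add a complete graph `Kₙ` on `n` new vertices, each
new vertex adjacent to every vertex of `N_G(v)`. -/
def expandVertex {V : Type*} (G : SimpleGraph V) (v : V) (n : ℕ) :
    SimpleGraph ({u : V // u ≠ v} ⊕ Fin n) :=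
  SimpleGraph.fromRel fun x y =>
    match x, y with
    | Sum.inl a, Sum.inl b => G.Adj a.1 b.1
    | Sum.inl a, Sum.inr _ => G.Adj a.1 v
    | Sum.inr _, Sum.inl b => G.Adj b.1 v
    | Sum.inr _, Sum.inr _ => True

namespace WCE

variable {V : Type*} [DecidableEq V] {G : SimpleGraph V} {v : V} {n : ℕ}

lemma adj_ll (a b : {u : V // u ≠ v}) :
    (expandVertex G v n).Adj (Sum.inl a) (Sum.inl b) ↔ G.Adj a.1 b.1 := by
  simp only [expandVertex, SimpleGraph.fromRel_adj]
  constructor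
  · rintro ⟨-, h | h⟩
    · exact h
    · exact h.symm
  · intro h
    refine ⟨fun he => ?_, Or.inl h⟩
    cases Sum.inl_injective he; exact G.irrefl h

lemma adj_lr (a : {u : V // u ≠ v}) (i : Fin n) :
    (expandVertex G v n).Adj (Sum.inl a) (Sum.inr i) ↔ G.Adj a.1 v := by
  simp only [expandVertex, SimpleGraph.fromRel_adj]
  simp

lemma adj_rr (i j : Fin n) :
    (expandVertex G v n).Adj (Sum.inr i : {u : V // u ≠ v} ⊕ Fin n) (Sum.inr j) ↔ i ≠ j := by
  simp only [expandVertex, SimpleGraph.fromRel_adj]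
  simp [Sum.inr.injEq]

/-- The natural injection `V → V'` sending `v` to the `i`-th new vertex. -/
def gm (v : V) [DecidableEq V] (i : Fin n) (u : V) : {u : V // u ≠ v} ⊕ Fin n :=
  if h : u = v then Sum.inr i else Sum.inl ⟨u, h⟩

/-- The natural projection `V' → V`, sending all new vertices to `v`. -/
def fm (v : V) : ({u : V // u ≠ v} ⊕ Fin n) → V := Sum.elim (fun a => a.1) (fun _ => v)

@[simp] lemma fm_inl (a : {u : V // u ≠ v}) : fm v (Sum.inl a : _ ⊕ Fin n) = a.1 := rfl
@[simp] lemma fm_inr (i : Fin n) : fm v (Sum.inr i : {u : V // u ≠ v} ⊕ Fin n) = v := rfl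

lemma gm_self (i : Fin n) : gm v i v = Sum.inr i := dif_pos rfl

lemma gm_of_ne (i : Fin n) {u : V} (h : u ≠ v) : gm v i u = Sum.inl ⟨u, h⟩ := dif_neg h

lemma fm_gm (i : Fin n) (u : V) : fm v (gm v i u) = u := by
  by_cases h : u = v
  · subst h; rw [gm_self]; rfl
  · rw [gm_of_ne i h]; rfl

lemma gm_inj {i : Fin n} : Function.Injective (gm v i) := by
  intro u1 u2 h
  by_cases h1 : u1 = v <;> by_cases h2 : u2 = v
  · rw [h1, h2]
  · rw [h1, gm_self, gm_of_ne i h2] at h; exact absurd h (by simp)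
  · rw [h2, gm_self, gm_of_ne i h1] at h; exact absurd h (by simp)
  · rw [gm_of_ne i h1, gm_of_ne i h2] at h
    exact congrArg Subtype.val (Sum.inl_injective h)

lemma mem_image_gm_inl {M : Finset V} {i : Fin n} (a : {u : V // u ≠ v}) :
    (Sum.inl a ∈ M.image (gm v i)) ↔ a.1 ∈ M := by
  constructor
  · intro h
    obtain ⟨u, hu, he⟩ := Finset.mem_image.1 h
    by_cases huv : u = v
    · rw [huv, gm_self] at he; exact absurd he (by simp)
    · rw [gm_of_ne i huv] at he
      obtain rfl : (⟨u, huv⟩ : {u : V // u ≠ v}) = a := Sum.inl_injective he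
      exact hu
  · intro h
    exact Finset.mem_image.2 ⟨a.1, h, by rw [gm_of_ne i a.2]⟩

lemma mem_image_gm_inr {M : Finset V} {i j : Fin n} :
    ((Sum.inr j : {u : V // u ≠ v} ⊕ Fin n) ∈ M.image (gm v i)) ↔ j = i ∧ v ∈ M := by
  constructor
  · intro h
    obtain ⟨u, hu, he⟩ := Finset.mem_image.1 h
    by_cases huv : u = v
    · rw [huv, gm_self] at he
      obtain rfl : i = j := Sum.inr_injective he
      exact ⟨rfl, huv ▸ hu⟩
    · rw [gm_of_ne i huv] at he; exact absurd he (by simp)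
  · rintro ⟨rfl, hv⟩
    exact Finset.mem_image.2 ⟨v, hv, gm_self _⟩

lemma insert_indep {α : Type*} [DecidableEq α] {G : SimpleGraph α} {M : Finset α} (hM : IsIndepF G M)
    {x : α} (h : ∀ y ∈ M, ¬ G.Adj x y) : IsIndepF G (insert x M) := by
  intro u1 h1 u2 h2 hadj
  rcases Finset.mem_insert.1 h1 with h1 | h1
  · rcases Finset.mem_insert.1 h2 with h2 | h2
    · rw [h1, h2] at hadj; exact G.irrefl hadj
    · rw [h1] at hadj; exact h _ h2 hadj
  · rcases Finset.mem_insert.1 h2 with h2 | h2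
    · rw [h2] at hadj; exact h _ h1 hadj.symm
    · exact hM _ h1 _ h2 hadj

lemma mem_of_max {α : Type*} {G : SimpleGraph α} [DecidableEq α] {M : Finset α}
    (hM : IsMaxIndepF G M) {x : α} (h : ∀ y ∈ M, ¬ G.Adj x y) : x ∈ M := by
  have := hM.2 _ (insert_indep hM.1 h) (Finset.subset_insert _ _)
  rw [← this]; exact Finset.mem_insert_self _ _

lemma exists_max {α : Type*} [Fintype α] (G : SimpleGraph α) (S : Finset α)
    (hS : IsIndepF G S) : ∃ M, IsMaxIndepF G M ∧ S ⊆ M := by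
  obtain ⟨M, hMmem, hMmax⟩ := Set.Finite.exists_maximalFor id
    {M : Finset α | IsIndepF G M ∧ S ⊆ M} (Set.toFinite _) ⟨S, hS, Finset.Subset.refl S⟩
  exact ⟨M, ⟨hMmem.1, fun M' hM' hsub =>
    Finset.Subset.antisymm (hMmax ⟨hM', hMmem.2.trans hsub⟩ hsub) hsub⟩, hMmem.2⟩

lemma up_max {M : Finset V} (hM : IsMaxIndepF G M) (i : Fin n) :
    IsMaxIndepF (expandVertex G v n) (M.image (gm v i)) := by
  constructor
  · intro x hx y hy hadj
    obtain ⟨u1, hu1, rfl⟩ := Finset.mem_image.1 hx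
    obtain ⟨u2, hu2, rfl⟩ := Finset.mem_image.1 hy
    by_cases h1 : u1 = v <;> by_cases h2 : u2 = v
    · rw [h1, h2, gm_self] at hadj; exact (expandVertex G v n).irrefl hadj
    · rw [h1, gm_self, gm_of_ne i h2] at hadj
      exact hM.1 _ hu2 _ (h1 ▸ hu1) ((adj_lr _ i).1 hadj.symm)
    · rw [h2, gm_of_ne i h1, gm_self] at hadj
      exact hM.1 _ hu1 _ (h2 ▸ hu2) ((adj_lr _ i).1 hadj)
    · rw [gm_of_ne i h1, gm_of_ne i h2] at hadj
      exact hM.1 _ hu1 _ hu2 ((adj_ll _ _).1 hadj)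
  · intro N' hN' hsub
    refine Finset.Subset.antisymm (fun x hx => ?_) hsub
    have hkey : ∀ u ∈ M, gm v i u ∈ N' := fun u hu =>
      hsub (Finset.mem_image.2 ⟨u, hu, rfl⟩)
    match x with
    | Sum.inl a =>
      have ha : a.1 ∈ M := by
        refine mem_of_max hM (fun u hu hadj => ?_)
        by_cases huv : u = v
        · exact hN' _ hx _ (hkey u hu)
            (by rw [huv, gm_self]; exact (adj_lr a i).2 (huv ▸ hadj))
        · exact hN' _ hx _ (hkey u hu) (by rw [gm_of_ne i huv]; exact (adj_ll _ _).2 hadj)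
      rw [mem_image_gm_inl]; exact ha
    | Sum.inr j =>
      have hv : v ∈ M := by
        refine mem_of_max hM (fun u hu hadj => ?_)
        by_cases huv : u = v
        · exact G.irrefl (huv ▸ hadj)
        · exact hN' _ (hkey u hu) _ hx (by rw [gm_of_ne i huv]; exact (adj_lr _ j).2 hadj.symm)
      have hji : j = i := by
        by_contra hji
        exact hN' _ hx _ (by rw [← gm_self i]; exact hkey v hv) ((adj_rr j i).2 hji)
      rw [mem_image_gm_inr]; exact ⟨hji, hv⟩

lemma injOn_fm {M' : Finset ({u : V // u ≠ v} ⊕ Fin n)}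
    (h : IsIndepF (expandVertex G v n) M') :
    ∀ x ∈ M', ∀ y ∈ M', fm v x = fm v y → x = y := by
  rintro (a | i) hx (b | j) hy hf
  · exact congrArg Sum.inl (Subtype.ext hf)
  · exact absurd hf a.2
  · exact absurd hf.symm b.2
  · have := h _ hx _ hy
    rw [adj_rr] at this
    exact congrArg Sum.inr (not_ne_iff.1 this)

lemma down_max (hn : 1 ≤ n) {M' : Finset ({u : V // u ≠ v} ⊕ Fin n)}
    (hM' : IsMaxIndepF (expandVertex G v n) M') :
    IsMaxIndepF G (M'.image (fm v)) := by
  constructor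
  · intro u1 h1 u2 h2 hadj
    obtain ⟨x, hx, rfl⟩ := Finset.mem_image.1 h1
    obtain ⟨y, hy, rfl⟩ := Finset.mem_image.1 h2
    match x, y with
    | Sum.inl a, Sum.inl b => exact hM'.1 _ hx _ hy ((adj_ll _ _).2 hadj)
    | Sum.inl a, Sum.inr j => exact hM'.1 _ hx _ hy ((adj_lr _ _).2 hadj)
    | Sum.inr i, Sum.inl b => exact hM'.1 _ hy _ hx ((adj_lr _ _).2 hadj.symm)
    | Sum.inr i, Sum.inr j => exact G.irrefl hadj
  · intro N hN hsub
    refine Finset.Subset.antisymm (fun b hb => ?_) hsub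
    have hmemN : ∀ x ∈ M', fm v x ∈ N := fun x hx => hsub (Finset.mem_image.2 ⟨x, hx, rfl⟩)
    by_cases hbv : b = v
    · rw [hbv]
      by_cases hr : ∃ j : Fin n, Sum.inr j ∈ M'
      · obtain ⟨j, hj⟩ := hr
        exact Finset.mem_image.2 ⟨Sum.inr j, hj, rfl⟩
      · push_neg at hr
        have hvN : v ∈ N := hbv ▸ hb
        have hi : (Sum.inr ⟨0, hn⟩ : {u : V // u ≠ v} ⊕ Fin n) ∈ M' := by
          refine mem_of_max hM' (fun y hy hadj => ?_)
          match y with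
          | Sum.inl a =>
            exact hN _ hvN _ (hmemN _ hy) (((adj_lr _ _).1 hadj.symm).symm)
          | Sum.inr j => exact hr j hy
        exact Finset.mem_image.2 ⟨_, hi, rfl⟩
    · have hb' : (Sum.inl ⟨b, hbv⟩ : {u : V // u ≠ v} ⊕ Fin n) ∈ M' := by
        refine mem_of_max hM' (fun y hy hadj => ?_)
        match y with
        | Sum.inl a => exact hN _ hb _ (hmemN _ hy) ((adj_ll _ _).1 hadj)
        | Sum.inr j => exact hN _ hb _ (hmemN _ hy) ((adj_lr _ _).1 hadj)
      exact Finset.mem_image.2 ⟨_, hb', rfl⟩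

end WCE

/-- Replacing a vertex `v` of `G` by a complete graph `Kₙ` (`n ≥ 1`) joined to `N_G(v)`
does not change the well-covered dimension. -/
theorem wcdim_expandVertex {V : Type*} [Fintype V] [DecidableEq V] (G : SimpleGraph V)
    (F : Type*) [Field F] (v : V) (n : ℕ) (hn : 1 ≤ n) :
    wcdim F (expandVertex G v n) = wcdim F G := by
  classical
  set i₀ : Fin n := ⟨0, hn⟩ with hi₀
  have hB : ∀ w' ∈ wcSpace F (expandVertex G v n),
      (fun u => w' (WCE.gm v i₀ u)) ∈ wcSpace F G := by
    intro w' hw' M N hM hN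
    calc ∑ u ∈ M, w' (WCE.gm v i₀ u)
        = ∑ x ∈ M.image (WCE.gm v i₀), w' x :=
          (Finset.sum_image (fun x _ y _ h => WCE.gm_inj h)).symm
      _ = ∑ x ∈ N.image (WCE.gm v i₀), w' x :=
          hw' _ _ (WCE.up_max hM i₀) (WCE.up_max hN i₀)
      _ = ∑ u ∈ N, w' (WCE.gm v i₀ u) :=
          Finset.sum_image (fun x _ y _ h => WCE.gm_inj h)
  have hA : ∀ w ∈ wcSpace F G,
      (fun x => w (WCE.fm v x)) ∈ wcSpace F (expandVertex G v n) := by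
    intro w hw M' N' hM' hN'
    calc ∑ x ∈ M', w (WCE.fm v x)
        = ∑ u ∈ M'.image (WCE.fm v), w u := (Finset.sum_image (WCE.injOn_fm hM'.1)).symm
      _ = ∑ u ∈ N'.image (WCE.fm v), w u :=
          hw _ _ (WCE.down_max hn hM') (WCE.down_max hn hN')
      _ = ∑ x ∈ N', w (WCE.fm v x) := Finset.sum_image (WCE.injOn_fm hN'.1)
  have hD : ∀ w' ∈ wcSpace F (expandVertex G v n),
      ∀ x, w' (WCE.gm v i₀ (WCE.fm v x)) = w' x := by
    intro w' hw' x
    match x with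
    | Sum.inl a =>
      rw [WCE.fm_inl, WCE.gm_of_ne i₀ a.2]
    | Sum.inr j =>
      rw [WCE.fm_inr, WCE.gm_self]
      obtain ⟨M₀, hM₀, hvM₀⟩ := WCE.exists_max G {v}
        (by intro u hu w hw hadj
            rw [Finset.mem_singleton] at hu hw
            subst hu; subst hw; exact G.irrefl hadj)
      have hv : v ∈ M₀ := hvM₀ (Finset.mem_singleton_self v)
      have hsum := hw' _ _ (WCE.up_max hM₀ i₀) (WCE.up_max hM₀ j)
      rw [Finset.sum_image (fun x _ y _ h => WCE.gm_inj h),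
        Finset.sum_image (fun x _ y _ h => WCE.gm_inj h)] at hsum
      rw [← Finset.add_sum_erase _ _ hv, ← Finset.add_sum_erase _ _ hv] at hsum
      have heq : ∑ u ∈ M₀.erase v, w' (WCE.gm v i₀ u) =
          ∑ u ∈ M₀.erase v, w' (WCE.gm v j u) :=
        Finset.sum_congr rfl fun u hu => by
          rw [WCE.gm_of_ne i₀ (Finset.ne_of_mem_erase hu),
            WCE.gm_of_ne j (Finset.ne_of_mem_erase hu)]
      rw [heq, WCE.gm_self, WCE.gm_self] at hsum
      exact add_right_cancel hsum
  have e : (wcSpace F (expandVertex G v n)) ≃ₗ[F] (wcSpace F G) :=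
    { toFun := fun w' => ⟨fun u => w'.1 (WCE.gm v i₀ u), hB _ w'.2⟩
      map_add' := fun a b => rfl
      map_smul' := fun c a => rfl
      invFun := fun w => ⟨fun x => w.1 (WCE.fm v x), hA _ w.2⟩
      left_inv := fun w' => Subtype.ext (funext fun x => hD _ w'.2 x)
      right_inv := fun w => Subtype.ext (funext fun u => by
        show w.1 (WCE.fm v (WCE.gm v i₀ u)) = w.1 u
        rw [WCE.fm_gm]) }
  exact e.finrank_eq
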